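/- Let Bⁿ ⊂ ℝⁿ be the open unit ball and define the Funk metric F(x,y) = (√(‖y‖² − (‖x‖²‖y‖² − ⟨x,y⟩²)) + ⟨x,y⟩) / (1 − ‖x‖²) for x ∈ Bⁿ, y ∈ ℝⁿ∖{0}. Then F satisfies Rapcsák's equations ∑_k (∂²F/∂x^k∂y^l) y^k = ∂F/∂x^l for every l (F is projective), and its projective factor P = (∑_m (∂F/∂x^m) y^m)/(2F) satisfies ∂P/∂x^k = P·∂P/∂y^k + (1/4)·F·∂F/∂y^k for every k; i.e., F has constant flag curvature K = −1/4. -/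

import Mathlib

open scoped RealInnerProductSpace BigOperators

noncomputable section

abbrev E (n : ℕ) := EuclideanSpace ℝ (Fin n)

/-- Partial derivative of `F(x,y)` in the direction `∂/∂xⁱ`. -/
def pdx {n : ℕ} (F : E n → E n → ℝ) (i : Fin n) (x y : E n) : ℝ :=
  deriv (fun t : ℝ => F (x + t • EuclideanSpace.single i (1 : ℝ)) y) 0

/-- Partial derivative of `F(x,y)` in the direction `∂/∂yⁱ`. -/
def pdy {n : ℕ} (F : E n → E n → ℝ) (i : Fin n) (x y : E n) : ℝ :=
  deriv (fun t : ℝ => F x (y + t • EuclideanSpace.single i (1 : ℝ))) 0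

/-- The projective factor `P = (∑_m F_{x^m} y^m)/(2F)`. -/
def projFactor {n : ℕ} (F : E n → E n → ℝ) (x y : E n) : ℝ :=
  (∑ m, pdx F m x y * y m) / (2 * F x y)
/-- The Funk metric on the unit ball. -/
def Funk {n : ℕ} (x y : E n) : ℝ :=
  (Real.sqrt (‖y‖ ^ 2 - (‖x‖ ^ 2 * ‖y‖ ^ 2 - ⟪x, y⟫ ^ 2)) + ⟪x, y⟫) / (1 - ‖x‖ ^ 2)

namespace FunkAux

/-! ### Scalar model functions -/

def fS (Q s a : ℝ) : ℝ := (Q + s) / (1 - a)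
def fY (Q s a xl yl : ℝ) : ℝ := ((s*xl + (1-a)*yl)/Q + xl)/(1-a)
def fX (Q s a b xk yk : ℝ) : ℝ :=
  (((s*yk - b*xk)/Q + yk)*(1-a) + (Q + s)*(2*xk))/(1-a)^2
def cA (Q s a b xl yl : ℝ) : ℝ :=
  ((-2*yl/Q + b*(s*xl+(1-a)*yl)/Q^3)*(1-a) + ((s*xl+(1-a)*yl)/Q + xl)*2)/(1-a)^2
def cB (Q s a xl yl : ℝ) : ℝ := (xl/Q - s*(s*xl+(1-a)*yl)/Q^3)/(1-a)
def cC (Q s a : ℝ) : ℝ := (s/Q + 1)/(1-a)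

/-! ### Elementary derivatives -/

lemma hS (s c : ℝ) : HasDerivAt (fun t : ℝ => s + t * c) c 0 := by
  simpa using ((hasDerivAt_id (0:ℝ)).mul_const c).const_add s

lemma hA (a xk : ℝ) : HasDerivAt (fun t : ℝ => a + 2*t*xk + t^2) (2*xk) 0 := by
  have h1 : HasDerivAt (fun t : ℝ => 2*t) 2 0 := by
    simpa using (hasDerivAt_id (0:ℝ)).const_mul 2
  have h2 := ((h1.mul_const xk).const_add a).add (hasDerivAt_pow 2 (0:ℝ))
  norm_num at h2
  exact h2

lemma hasDerivAt_x (s a b xk yk : ℝ) (ha : a < 1) (hpos : 0 < s^2 + (1-a)*b) :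
    HasDerivAt (fun t : ℝ =>
      fS (Real.sqrt ((s + t*yk)^2 + (1 - (a + 2*t*xk + t^2))*b)) (s + t*yk) (a + 2*t*xk + t^2))
      (fX (Real.sqrt (s^2 + (1-a)*b)) s a b xk yk) 0 := by
  have hP : HasDerivAt (fun t : ℝ => (s + t*yk)^2 + (1 - (a + 2*t*xk + t^2))*b)
      (2*s*yk - 2*xk*b) 0 := by
    have := ((hS s yk).pow 2).add (((hA a xk).const_sub 1).mul_const b)
    norm_num at this
    exact this.congr_deriv (by ring)
  have hP0 : (s + 0*yk)^2 + (1 - (a + 2*0*xk + 0^2))*b = s^2 + (1-a)*b := by ring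
  have hQ0 : Real.sqrt (s^2 + (1-a)*b) ≠ 0 := by positivity
  have hR := hP.sqrt (by simpa [hP0] using ne_of_gt hpos)
  rw [hP0] at hR
  have hNum := hR.add (hS s yk)
  have hDen : HasDerivAt (fun t : ℝ => 1 - (a + 2*t*xk + t^2)) (-(2*xk)) 0 := (hA a xk).const_sub 1
  have hDen0 : (fun t : ℝ => 1 - (a + 2*t*xk + t^2)) 0 ≠ 0 := by norm_num; linarith
  have hfin := hNum.div hDen hDen0
  norm_num at hfin
  refine hfin.congr_deriv ?_
  unfold fX
  have h1a : (1:ℝ) - a ≠ 0 := by linarith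
  set Q := Real.sqrt (s^2 + (1-a)*b) with hQdef
  field_simp

lemma hasDerivAt_y (s a b xl yl : ℝ) (ha : a < 1) (hpos : 0 < s^2 + (1-a)*b) :
    HasDerivAt (fun t : ℝ =>
      fS (Real.sqrt ((s + t*xl)^2 + (1-a)*(b + 2*t*yl + t^2))) (s + t*xl) a)
      (fY (Real.sqrt (s^2 + (1-a)*b)) s a xl yl) 0 := by
  have h1a : (1:ℝ) - a ≠ 0 := by linarith
  have hQ0 : Real.sqrt (s^2 + (1-a)*b) ≠ 0 := by positivity
  have hP : HasDerivAt (fun t : ℝ => (s + t*xl)^2 + (1-a)*(b + 2*t*yl + t^2))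
      (2*s*xl + (1-a)*(2*yl)) 0 := by
    have := ((hS s xl).pow 2).add ((hA b yl).const_mul (1-a))
    norm_num at this
    exact this.congr_deriv (by ring)
  have hP0 : (s + 0*xl)^2 + (1-a)*(b + 2*0*yl + 0^2) = s^2 + (1-a)*b := by ring
  have hR := hP.sqrt (by simpa [hP0] using ne_of_gt hpos)
  rw [hP0] at hR
  have hfin := (hR.add (hS s xl)).div_const (1-a)
  unfold fS
  norm_num at hfin
  refine hfin.congr_deriv ?_
  unfold fY
  set Q := Real.sqrt (s^2 + (1-a)*b) with hQdef
  field_simp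

set_option maxHeartbeats 1000000 in
lemma hasDerivAt_G (s a b xl yl xk yk d : ℝ) (ha : a < 1) (hpos : 0 < s^2 + (1-a)*b) :
    HasDerivAt (fun t : ℝ =>
      fY (Real.sqrt ((s + t*yk)^2 + (1 - (a + 2*t*xk + t^2))*b)) (s + t*yk)
        (a + 2*t*xk + t^2) (xl + t*d) yl)
      (cA (Real.sqrt (s^2 + (1-a)*b)) s a b xl yl * xk
        + cB (Real.sqrt (s^2 + (1-a)*b)) s a xl yl * yk
        + cC (Real.sqrt (s^2 + (1-a)*b)) s a * d) 0 := by
  have h1a : (1:ℝ) - a ≠ 0 := by linarith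
  have hQ0 : Real.sqrt (s^2 + (1-a)*b) ≠ 0 := by positivity
  have hP : HasDerivAt (fun t : ℝ => (s + t*yk)^2 + (1 - (a + 2*t*xk + t^2))*b)
      (2*s*yk - 2*xk*b) 0 := by
    have := ((hS s yk).pow 2).add (((hA a xk).const_sub 1).mul_const b)
    norm_num at this
    exact this.congr_deriv (by ring)
  have hP0 : (s + 0*yk)^2 + (1 - (a + 2*0*xk + 0^2))*b = s^2 + (1-a)*b := by ring
  have hR := hP.sqrt (by simpa [hP0] using ne_of_gt hpos)
  rw [hP0] at hR
  have hM : HasDerivAt (fun t : ℝ =>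
      (s + t*yk)*(xl + t*d) + (1 - (a + 2*t*xk + t^2))*yl)
      (yk*xl + s*d - 2*xk*yl) 0 := by
    have := ((hS s yk).mul (hS xl d)).add (((hA a xk).const_sub 1).mul_const yl)
    norm_num at this
    exact this.congr_deriv (by ring)
  have hMR := hM.div hR (by simpa using hQ0)
  have hN := hMR.add (hS xl d)
  have hDen : HasDerivAt (fun t : ℝ => 1 - (a + 2*t*xk + t^2)) (-(2*xk)) 0 := (hA a xk).const_sub 1
  have hDen0 : (fun t : ℝ => 1 - (a + 2*t*xk + t^2)) 0 ≠ 0 := by norm_num; linarith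
  have hfin := hN.div hDen hDen0
  unfold fY
  norm_num at hfin
  refine hfin.congr_deriv ?_
  unfold cA cB cC
  set Q := Real.sqrt (s^2 + (1-a)*b) with hQdef
  field_simp
  ring

/-! ### Core algebra -/

lemma rap_alg (Q s a b xl yl : ℝ) (hQ : Q ≠ 0) (ha : (1:ℝ) - a ≠ 0)
    (h2 : Q^2 = s^2 + (1-a)*b) :
    cA Q s a b xl yl * s + cB Q s a xl yl * b + cC Q s a * yl = fX Q s a b xl yl := by
  have hb : b = (Q^2 - s^2)/(1-a) := by field_simp; linarith [h2]
  subst hb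
  unfold cA cB cC fX
  field_simp
  ring

lemma okada_alg (Q s a b xk yk : ℝ) (hQ : Q ≠ 0) (ha : (1:ℝ) - a ≠ 0)
    (h2 : Q^2 = s^2 + (1-a)*b) :
    fX Q s a b xk yk = fS Q s a * fY Q s a xk yk := by
  have hb : b = (Q^2 - s^2)/(1-a) := by field_simp; linarith [h2]
  subst hb
  unfold fX fS fY
  field_simp
  ring

lemma fX_linear (Q s a b xk yk : ℝ) (hQ : Q ≠ 0) (ha : (1:ℝ) - a ≠ 0) :
    fX Q s a b xk yk =
      ((-(b/Q))*(1-a) + (Q+s)*2)/(1-a)^2 * xk + ((s/Q + 1)/(1-a)) * yk := by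
  unfold fX; field_simp; ring

lemma sum_alg (Q s a b : ℝ) (hQ : Q ≠ 0) (ha : (1:ℝ) - a ≠ 0)
    (h2 : Q^2 = s^2 + (1-a)*b) :
    ((-(b/Q))*(1-a) + (Q+s)*2)/(1-a)^2 * s + ((s/Q + 1)/(1-a)) * b = fS Q s a ^ 2 := by
  have hb : b = (Q^2 - s^2)/(1-a) := by field_simp; linarith [h2]
  subst hb
  unfold fS
  field_simp
  ring

lemma fS_pos (Q s a b : ℝ) (hQ : 0 < Q) (ha : a < 1) (hb : 0 < b)
    (h2 : Q^2 = s^2 + (1-a)*b) : 0 < fS Q s a := by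
  have h1 : 0 < (1-a)*b := mul_pos (by linarith) hb
  have : 0 < Q + s := by nlinarith [sq_nonneg (Q + s), sq_nonneg (Q - s)]
  exact div_pos this (by linarith)

/-! ### Geometry of shifts -/

variable {n : ℕ}

lemma inner_shift_left (x y : E n) (k : Fin n) (t : ℝ) :
    ⟪x + t • EuclideanSpace.single k (1:ℝ), y⟫ = ⟪x, y⟫ + t * y k := by
  rw [inner_add_left, real_inner_smul_left, EuclideanSpace.inner_single_left]
  simp

lemma inner_shift_right (x y : E n) (k : Fin n) (t : ℝ) :
    ⟪x, y + t • EuclideanSpace.single k (1:ℝ)⟫ = ⟪x, y⟫ + t * x k := by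
  rw [inner_add_right, real_inner_smul_right, EuclideanSpace.inner_single_right]
  simp

lemma normsq_shift (x : E n) (k : Fin n) (t : ℝ) :
    ‖x + t • EuclideanSpace.single k (1:ℝ)‖ ^ 2 = ‖x‖ ^ 2 + 2 * t * x k + t ^ 2 := by
  rw [norm_add_sq_real, real_inner_smul_right, EuclideanSpace.inner_single_right, norm_smul]
  simp [EuclideanSpace.norm_single, abs_mul_abs_self]
  ring

lemma apply_shift (x : E n) (k l : Fin n) (t : ℝ) :
    (x + t • EuclideanSpace.single k (1:ℝ)) l = x l + t * (if l = k then 1 else 0) := by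
  simp [EuclideanSpace.single_apply]

lemma inner_sum (x y : E n) : ⟪x, y⟫ = ∑ k, x k * y k := by
  simp [PiLp.inner_apply, RCLike.inner_apply, conj_trivial, mul_comm]

lemma funk_eq (x y : E n) :
    Funk x y = fS (Real.sqrt (⟪x, y⟫^2 + (1 - ‖x‖^2)*‖y‖^2)) ⟪x, y⟫ (‖x‖^2) := by
  unfold Funk fS
  rw [show ‖y‖^2 - (‖x‖^2*‖y‖^2 - ⟪x, y⟫^2) = ⟪x, y⟫^2 + (1-‖x‖^2)*‖y‖^2 from by ring]

section Formulas

variable (x y : E n)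

lemma basic_pos (hx : ‖x‖ < 1) (hy : y ≠ 0) : ‖x‖^2 < 1 ∧ 0 < ‖y‖^2 ∧ 0 < ⟪x, y⟫^2 + (1 - ‖x‖^2)*‖y‖^2 := by
  have ha : ‖x‖^2 < 1 := by nlinarith [norm_nonneg x]
  have hb : 0 < ‖y‖^2 := pow_pos (norm_pos_iff.mpr hy) 2
  exact ⟨ha, hb, by nlinarith [sq_nonneg ⟪x, y⟫]⟩

lemma pdy_funk (hx : ‖x‖ < 1) (hy : y ≠ 0) (l : Fin n) :
    pdy Funk l x y =
      fY (Real.sqrt (⟪x, y⟫^2 + (1 - ‖x‖^2)*‖y‖^2)) ⟪x, y⟫ (‖x‖^2) (x l) (y l) := by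
  obtain ⟨ha, hb, hpos⟩ := basic_pos x y hx hy
  unfold pdy
  have hfun : (fun t : ℝ => Funk x (y + t • EuclideanSpace.single l (1:ℝ))) =
      (fun t : ℝ => fS (Real.sqrt ((⟪x, y⟫ + t * x l)^2 +
        (1 - ‖x‖^2)*(‖y‖^2 + 2*t*(y l) + t^2))) (⟪x, y⟫ + t * x l) (‖x‖^2)) := by
    funext t
    rw [funk_eq, inner_shift_right, normsq_shift]
  rw [hfun]
  exact (hasDerivAt_y ⟪x, y⟫ (‖x‖^2) (‖y‖^2) (x l) (y l) ha hpos).deriv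

lemma pdx_funk (hx : ‖x‖ < 1) (hy : y ≠ 0) (k : Fin n) :
    pdx Funk k x y =
      fX (Real.sqrt (⟪x, y⟫^2 + (1 - ‖x‖^2)*‖y‖^2)) ⟪x, y⟫ (‖x‖^2) (‖y‖^2) (x k) (y k) := by
  obtain ⟨ha, hb, hpos⟩ := basic_pos x y hx hy
  unfold pdx
  have hfun : (fun t : ℝ => Funk (x + t • EuclideanSpace.single k (1:ℝ)) y) =
      (fun t : ℝ => fS (Real.sqrt ((⟪x, y⟫ + t * y k)^2 +
        (1 - (‖x‖^2 + 2*t*(x k) + t^2))*‖y‖^2)) (⟪x, y⟫ + t * y k)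
        (‖x‖^2 + 2*t*(x k) + t^2)) := by
    funext t
    rw [funk_eq, inner_shift_left, normsq_shift]
  rw [hfun]
  exact (hasDerivAt_x ⟪x, y⟫ (‖x‖^2) (‖y‖^2) (x k) (y k) ha hpos).deriv

lemma ball_eventually (hx : ‖x‖ < 1) (k : Fin n) :
    ∀ᶠ t : ℝ in nhds 0, ‖x + t • EuclideanSpace.single k (1:ℝ)‖ < 1 := by
  have hcont : Continuous (fun t : ℝ => ‖x + t • EuclideanSpace.single k (1:ℝ)‖) :=
    (continuous_const.add (continuous_id.smul continuous_const)).norm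
  have h0 : ‖x + (0:ℝ) • EuclideanSpace.single k (1:ℝ)‖ < 1 := by simpa using hx
  exact (hcont.continuousAt).eventually_lt continuousAt_const h0

lemma pdx_pdy_funk (hx : ‖x‖ < 1) (hy : y ≠ 0) (k l : Fin n) :
    pdx (fun a b => pdy Funk l a b) k x y =
      cA (Real.sqrt (⟪x, y⟫^2 + (1 - ‖x‖^2)*‖y‖^2)) ⟪x, y⟫ (‖x‖^2) (‖y‖^2) (x l) (y l) * x k
      + cB (Real.sqrt (⟪x, y⟫^2 + (1 - ‖x‖^2)*‖y‖^2)) ⟪x, y⟫ (‖x‖^2) (x l) (y l) * y k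
      + cC (Real.sqrt (⟪x, y⟫^2 + (1 - ‖x‖^2)*‖y‖^2)) ⟪x, y⟫ (‖x‖^2)
          * (if l = k then 1 else 0) := by
  obtain ⟨ha, hb, hpos⟩ := basic_pos x y hx hy
  unfold pdx
  have hev : (fun t : ℝ => pdy Funk l (x + t • EuclideanSpace.single k (1:ℝ)) y) =ᶠ[nhds 0]
      (fun t : ℝ => fY (Real.sqrt ((⟪x, y⟫ + t * y k)^2 +
        (1 - (‖x‖^2 + 2*t*(x k) + t^2))*‖y‖^2)) (⟪x, y⟫ + t * y k)
        (‖x‖^2 + 2*t*(x k) + t^2) (x l + t*(if l = k then 1 else 0)) (y l)) := by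
    filter_upwards [ball_eventually x hx k] with t ht
    rw [pdy_funk _ y ht hy l, inner_shift_left, normsq_shift, apply_shift]
  rw [hev.deriv_eq]
  exact (hasDerivAt_G ⟪x, y⟫ (‖x‖^2) (‖y‖^2) (x l) (y l) (x k) (y k)
    (if l = k then 1 else 0) ha hpos).deriv

lemma sum_pdx (hx : ‖x‖ < 1) (hy : y ≠ 0) : ∑ m, pdx Funk m x y * y m = (Funk x y)^2 := by
  obtain ⟨ha, hb, hpos⟩ := basic_pos x y hx hy
  have hQ0 : Real.sqrt (⟪x, y⟫^2 + (1 - ‖x‖^2)*‖y‖^2) ≠ 0 := by positivity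
  have h1a : (1:ℝ) - ‖x‖^2 ≠ 0 := by linarith
  have h2 : Real.sqrt (⟪x, y⟫^2 + (1 - ‖x‖^2)*‖y‖^2) ^ 2 = ⟪x, y⟫^2 + (1 - ‖x‖^2)*‖y‖^2 :=
    Real.sq_sqrt hpos.le
  set Q := Real.sqrt (⟪x, y⟫^2 + (1 - ‖x‖^2)*‖y‖^2) with hQdef
  set C1 : ℝ := ((-(‖y‖^2/Q))*(1-‖x‖^2) + (Q+⟪x, y⟫)*2)/(1-‖x‖^2)^2 with hC1
  set C2 : ℝ := ((⟪x, y⟫/Q + 1)/(1-‖x‖^2)) with hC2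
  calc ∑ m, pdx Funk m x y * y m
      = ∑ m, (C1 * (x m * y m) + C2 * (y m * y m)) := by
        refine Finset.sum_congr rfl fun m _ => ?_
        rw [pdx_funk x y hx hy m, fX_linear _ _ _ _ _ _ hQ0 h1a]
        ring
    _ = C1 * (∑ m, x m * y m) + C2 * (∑ m, y m * y m) := by
        rw [Finset.sum_add_distrib, Finset.mul_sum, Finset.mul_sum]
    _ = C1 * ⟪x, y⟫ + C2 * ‖y‖^2 := by
        rw [← inner_sum, ← inner_sum, real_inner_self_eq_norm_sq]
    _ = fS Q ⟪x, y⟫ (‖x‖^2) ^ 2 := sum_alg Q ⟪x, y⟫ (‖x‖^2) (‖y‖^2) hQ0 h1a h2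
    _ = (Funk x y)^2 := by rw [funk_eq]

lemma funk_pos (hx : ‖x‖ < 1) (hy : y ≠ 0) : 0 < Funk x y := by
  obtain ⟨ha, hb, hpos⟩ := basic_pos x y hx hy
  have h2 : Real.sqrt (⟪x, y⟫^2 + (1 - ‖x‖^2)*‖y‖^2) ^ 2 = ⟪x, y⟫^2 + (1 - ‖x‖^2)*‖y‖^2 :=
    Real.sq_sqrt hpos.le
  rw [funk_eq]
  exact fS_pos _ _ _ (‖y‖^2) (Real.sqrt_pos.mpr hpos) ha hb h2

lemma projFactor_funk (hx : ‖x‖ < 1) (hy : y ≠ 0) : projFactor Funk x y = Funk x y / 2 := by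
  have hF := funk_pos x y hx hy
  unfold projFactor
  rw [sum_pdx x y hx hy, sq]
  rw [mul_comm (2:ℝ) (Funk x y), mul_div_mul_left _ _ (ne_of_gt hF)]

end Formulas

end FunkAux

open FunkAux

/-- The Funk metric is projective and has constant flag curvature `K = −1/4`. -/
theorem funk_projective_constant_curvature {n : ℕ} :
    (∀ x : E n, ‖x‖ < 1 → ∀ y : E n, y ≠ 0 → ∀ l : Fin n,
        (∑ k, pdx (fun a b => pdy Funk l a b) k x y * y k) = pdx Funk l x y) ∧
      (∀ x : E n, ‖x‖ < 1 → ∀ y : E n, y ≠ 0 → ∀ k : Fin n,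
        pdx (projFactor Funk) k x y =
          projFactor Funk x y * pdy (projFactor Funk) k x y
            + (1 / 4) * Funk x y * pdy Funk k x y) := by
  constructor
  · intro x hx y hy l
    obtain ⟨ha, hb, hpos⟩ := basic_pos x y hx hy
    have hQ0 : Real.sqrt (⟪x, y⟫^2 + (1 - ‖x‖^2)*‖y‖^2) ≠ 0 := by positivity
    have h1a : (1:ℝ) - ‖x‖^2 ≠ 0 := by linarith
    have h2 : Real.sqrt (⟪x, y⟫^2 + (1 - ‖x‖^2)*‖y‖^2) ^ 2 = ⟪x, y⟫^2 + (1 - ‖x‖^2)*‖y‖^2 :=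
      Real.sq_sqrt hpos.le
    set Q := Real.sqrt (⟪x, y⟫^2 + (1 - ‖x‖^2)*‖y‖^2) with hQdef
    set A := cA Q ⟪x, y⟫ (‖x‖^2) (‖y‖^2) (x l) (y l) with hAdef
    set B := cB Q ⟪x, y⟫ (‖x‖^2) (x l) (y l) with hBdef
    set C := cC Q ⟪x, y⟫ (‖x‖^2) with hCdef
    calc ∑ k, pdx (fun a b => pdy Funk l a b) k x y * y k
        = ∑ k, (A * (x k * y k) + B * (y k * y k)
            + (if l = k then C * y k else 0)) := by
          refine Finset.sum_congr rfl fun k _ => ?_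
          rw [pdx_pdy_funk x y hx hy k l]
          split_ifs <;> ring
      _ = A * (∑ k, x k * y k) + B * (∑ k, y k * y k) + C * y l := by
          rw [Finset.sum_add_distrib, Finset.sum_add_distrib, Finset.mul_sum, Finset.mul_sum]
          simp
      _ = A * ⟪x, y⟫ + B * ‖y‖^2 + C * y l := by
          rw [← inner_sum, ← inner_sum, real_inner_self_eq_norm_sq]
      _ = fX Q ⟪x, y⟫ (‖x‖^2) (‖y‖^2) (x l) (y l) :=
          rap_alg Q ⟪x, y⟫ (‖x‖^2) (‖y‖^2) (x l) (y l) hQ0 h1a h2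
      _ = pdx Funk l x y := (pdx_funk x y hx hy l).symm
  · intro x hx y hy k
    obtain ⟨ha, hb, hpos⟩ := basic_pos x y hx hy
    have hQ0 : Real.sqrt (⟪x, y⟫^2 + (1 - ‖x‖^2)*‖y‖^2) ≠ 0 := by positivity
    have h1a : (1:ℝ) - ‖x‖^2 ≠ 0 := by linarith
    have h2 : Real.sqrt (⟪x, y⟫^2 + (1 - ‖x‖^2)*‖y‖^2) ^ 2 = ⟪x, y⟫^2 + (1 - ‖x‖^2)*‖y‖^2 :=
      Real.sq_sqrt hpos.le
    -- partial derivatives of the projective factor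
    have hpdxP : pdx (projFactor Funk) k x y = pdx Funk k x y / 2 := by
      unfold pdx
      have hev : (fun t : ℝ => projFactor Funk (x + t • EuclideanSpace.single k (1:ℝ)) y)
          =ᶠ[nhds 0]
          (fun t : ℝ => Funk (x + t • EuclideanSpace.single k (1:ℝ)) y / 2) := by
        filter_upwards [ball_eventually x hx k] with t ht
        exact projFactor_funk _ y ht hy
      rw [hev.deriv_eq, deriv_div_const]
    have hpdyP : pdy (projFactor Funk) k x y = pdy Funk k x y / 2 := by
      unfold pdy
      have hne : ∀ᶠ t : ℝ in nhds 0, y + t • EuclideanSpace.single k (1:ℝ) ≠ 0 := by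
        have hcont : Continuous (fun t : ℝ => y + t • EuclideanSpace.single k (1:ℝ)) :=
          continuous_const.add (continuous_id.smul continuous_const)
        exact hcont.continuousAt.eventually_ne (by simpa using hy)
      have hev : (fun t : ℝ => projFactor Funk x (y + t • EuclideanSpace.single k (1:ℝ)))
          =ᶠ[nhds 0]
          (fun t : ℝ => Funk x (y + t • EuclideanSpace.single k (1:ℝ)) / 2) := by
        filter_upwards [hne] with t ht
        exact projFactor_funk x _ hx ht
      rw [hev.deriv_eq, deriv_div_const]
    rw [hpdxP, hpdyP, projFactor_funk x y hx hy, pdx_funk x y hx hy k, pdy_funk x y hx hy k,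
      funk_eq, okada_alg _ _ _ (‖y‖^2) _ _ hQ0 h1a h2]
    ring
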